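/- Fix β ∈ ℕ with β ≥ 1 and θ > 0, and let X have the generalized normal density q_θ(x) = (β θ^{1/(2β)}/Γ(1/(2β))) exp(−θ x^{2β}) on ℝ. Define u_θ(x) := −(2β(2β−1) θ^{−1+1/β} Γ(1−1/(2β))/Γ(1/(2β))) x + 2β x^{2β−1}. Then u_θ is W-orthogonal to the score matching test function x ↦ −2β x^{2β−1}: E_θ[(−2β X^{2β−1}) · u_θ(X)] = 0. Equivalently, using the moments E_θ[X^{2β}] = 1/(2βθ) and E_θ[X^{4β−2}] = θ^{−2+1/β} Γ(2 − 1/(2β))/Γ(1/(2β)), one has E_θ[X^{2β−1} u_θ(X)] = 0. (For β = 1, u_θ ≡ 0.) -/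

import Mathlib

open MeasureTheory Real

/-- Generalized normal density `q_θ(x) = β θ^{1/(2β)}/Γ(1/(2β)) · exp(−θ x^{2β})`. -/
noncomputable def gnDens (β : ℕ) (θ x : ℝ) : ℝ :=
  (β : ℝ) * θ ^ (1 / (2 * (β : ℝ))) / Real.Gamma (1 / (2 * (β : ℝ)))
    * Real.exp (-θ * x ^ (2 * β))

/-- The W-orthogonal element
`u_θ(x) = −(2β(2β−1) θ^{−1+1/β} Γ(1−1/(2β))/Γ(1/(2β))) x + 2β x^{2β−1}`. -/
noncomputable def uGN (β : ℕ) (θ x : ℝ) : ℝ :=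
  -(2 * (β : ℝ) * (2 * (β : ℝ) - 1) * θ ^ (-1 + 1 / (β : ℝ))
      * Real.Gamma (1 - 1 / (2 * (β : ℝ))) / Real.Gamma (1 / (2 * (β : ℝ)))) * x
    + 2 * (β : ℝ) * x ^ (2 * β - 1)

open Set in
/-- Integrability for even functions of `|x|`, analogous to `integral_comp_abs`. -/
lemma integrable_comp_abs' {f : ℝ → ℝ} (hf : IntegrableOn (fun x => f |x|) (Ioi 0)) :
    Integrable (fun x => f |x|) := by
  have int_Iic : IntegrableOn (fun x ↦ f |x|) (Iic 0) := by
    rw [← Measure.map_neg_eq_self (volume : Measure ℝ)]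
    let m : MeasurableEmbedding fun x : ℝ => -x := (Homeomorph.neg ℝ).measurableEmbedding
    rw [m.integrableOn_map_iff]
    simp_rw [Function.comp_def, abs_neg, neg_preimage, neg_Iic, neg_zero]
    exact Iff.mpr integrableOn_Ici_iff_integrableOn_Ioi hf
  have h := int_Iic.union hf
  rw [Iic_union_Ioi] at h
  rwa [← integrableOn_univ]

open Set in
lemma momInt (β k : ℕ) (hβ : 1 ≤ β) {θ : ℝ} (hθ : 0 < θ) :
    Integrable (fun x : ℝ => x ^ (2 * k) * Real.exp (-θ * x ^ (2 * β))) ∧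
    ∫ x : ℝ, x ^ (2 * k) * Real.exp (-θ * x ^ (2 * β)) =
      2 * (θ ^ (-(2 * (k : ℝ) + 1) / (2 * (β : ℝ))) * (1 / (2 * (β : ℝ)))
        * Real.Gamma ((2 * (k : ℝ) + 1) / (2 * (β : ℝ)))) := by
  have hb : (0 : ℝ) < (β : ℝ) := by exact_mod_cast hβ
  have habs : ∀ x : ℝ, x ^ (2 * k) * Real.exp (-θ * x ^ (2 * β))
      = |x| ^ (2 * k) * Real.exp (-θ * |x| ^ (2 * β)) := by
    intro x
    simp only [pow_mul, sq_abs]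
  have hIoi : EqOn (fun x : ℝ => x ^ (2 * k) * Real.exp (-θ * x ^ (2 * β)))
      (fun x => x ^ ((2 * k : ℕ) : ℝ) * Real.exp (-θ * x ^ ((2 * β : ℕ) : ℝ))) (Ioi 0) := by
    intro x _
    simp only [Real.rpow_natCast]
  have h2b : (1 : ℝ) ≤ ((2 * β : ℕ) : ℝ) := by
    have : (1:ℝ) ≤ (β:ℝ) := by exact_mod_cast hβ
    push_cast; nlinarith
  have hq : (-1 : ℝ) < ((2 * k : ℕ) : ℝ) := by
    have : (0:ℝ) ≤ ((2*k:ℕ):ℝ) := Nat.cast_nonneg _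
    linarith
  have hIntOn : IntegrableOn (fun x : ℝ => x ^ (2 * k) * Real.exp (-θ * x ^ (2 * β))) (Ioi 0) := by
    rw [integrableOn_congr_fun hIoi measurableSet_Ioi]
    exact integrableOn_rpow_mul_exp_neg_mul_rpow hq (by linarith) hθ
  constructor
  · have := integrable_comp_abs' (f := fun x => x ^ (2 * k) * Real.exp (-θ * x ^ (2 * β))) ?_
    · refine this.congr ?_
      filter_upwards with x using (habs x).symm
    · refine hIntOn.congr_fun (fun x hx => ?_) measurableSet_Ioi
      rw [abs_of_pos hx]
  · have h1 : ∫ x : ℝ, x ^ (2 * k) * Real.exp (-θ * x ^ (2 * β))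
        = ∫ x : ℝ, |x| ^ (2 * k) * Real.exp (-θ * |x| ^ (2 * β)) := by
      congr 1; funext x; exact habs x
    rw [h1, integral_comp_abs (f := fun x => x ^ (2 * k) * Real.exp (-θ * x ^ (2 * β))),
      setIntegral_congr_fun measurableSet_Ioi hIoi,
      integral_rpow_mul_exp_neg_mul_rpow (by positivity) hq hθ]
    push_cast
    ring_nf

/-- for the generalized normal distribution, `u_θ` is W-orthogonal to the score
matching test function `x ↦ −2β x^{2β−1}`, i.e. `E_θ[(−2β X^{2β−1}) u_θ(X)] = 0`; equivalently,
using `E_θ[X^{2β}] = 1/(2βθ)` and `E_θ[X^{4β−2}] = θ^{−2+1/β} Γ(2−1/(2β))/Γ(1/(2β))`,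
`E_θ[X^{2β−1} u_θ(X)] = 0`. For β = 1, `u_θ ≡ 0`. -/
theorem stmt16 (β : ℕ) (hβ : 1 ≤ β) (θ : ℝ) (hθ : 0 < θ) :
    (∫ x : ℝ, gnDens β θ x * x ^ (2 * β)) = 1 / (2 * (β : ℝ) * θ)
    ∧ (∫ x : ℝ, gnDens β θ x * x ^ (4 * β - 2))
        = θ ^ (-2 + 1 / (β : ℝ)) * Real.Gamma (2 - 1 / (2 * (β : ℝ)))
            / Real.Gamma (1 / (2 * (β : ℝ)))
    ∧ (∫ x : ℝ, gnDens β θ x * ((-(2 * (β : ℝ)) * x ^ (2 * β - 1)) * uGN β θ x)) = 0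
    ∧ (∫ x : ℝ, gnDens β θ x * (x ^ (2 * β - 1) * uGN β θ x)) = 0
    ∧ (β = 1 → ∀ x : ℝ, uGN β θ x = 0) := by
  have hb1 : (1:ℝ) ≤ (β:ℝ) := by exact_mod_cast hβ
  have hb : (0:ℝ) < (β:ℝ) := by linarith
  have hg : 0 < Real.Gamma (1 / (2 * (β:ℝ))) := Real.Gamma_pos_of_pos (by positivity)
  have hgne : Real.Gamma (1 / (2 * (β:ℝ))) ≠ 0 := ne_of_gt hg
  have hgn : ∀ x : ℝ, gnDens β θ x
      = (β:ℝ) * θ ^ (1 / (2 * (β:ℝ))) / Real.Gamma (1 / (2 * (β:ℝ)))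
        * Real.exp (-θ * x ^ (2 * β)) := fun x => rfl
  have hrpow : ∀ a c : ℝ, θ ^ a * θ ^ c = θ ^ (a + c) := fun a c => (Real.rpow_add hθ a c).symm
  have hhalf : 1 / (2 * (β:ℝ)) ≤ 1 / 2 := by
    apply div_le_div_of_nonneg_left <;> linarith
  -- first moment
  have m1 : (∫ x : ℝ, gnDens β θ x * x ^ (2 * β)) = 1 / (2 * (β:ℝ) * θ) := by
    have h := (momInt β β hβ hθ).2
    have step : (∫ x : ℝ, gnDens β θ x * x ^ (2 * β))
        = (β:ℝ) * θ ^ (1 / (2 * (β:ℝ))) / Real.Gamma (1 / (2 * (β:ℝ)))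
          * ∫ x : ℝ, x ^ (2 * β) * Real.exp (-θ * x ^ (2 * β)) := by
      rw [← integral_const_mul]
      congr 1; funext x; rw [hgn x]; ring
    have hG : Real.Gamma ((2 * (β:ℝ) + 1) / (2 * (β:ℝ)))
        = (1 / (2 * (β:ℝ))) * Real.Gamma (1 / (2 * (β:ℝ))) := by
      have he : (2 * (β:ℝ) + 1) / (2 * (β:ℝ)) = 1 / (2 * (β:ℝ)) + 1 := by
        field_simp
        ring
      rw [he, Real.Gamma_add_one (by positivity)]
    rw [step, h, hG]
    have hθe : θ ^ (1 / (2 * (β:ℝ))) * θ ^ (-(2 * (β:ℝ) + 1) / (2 * (β:ℝ))) = θ⁻¹ := by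
      rw [hrpow]
      have he : 1 / (2 * (β:ℝ)) + -(2 * (β:ℝ) + 1) / (2 * (β:ℝ)) = -1 := by
        field_simp
        ring
      rw [he, Real.rpow_neg_one]
    generalize hA : θ ^ (1 / (2 * (β:ℝ))) = A at hθe ⊢
    generalize hB : θ ^ (-(2 * (β:ℝ) + 1) / (2 * (β:ℝ))) = B at hθe ⊢
    have key : (β:ℝ) * A / Real.Gamma (1 / (2 * (β:ℝ)))
        * (2 * (B * (1 / (2 * (β:ℝ))) * (1 / (2 * (β:ℝ)) * Real.Gamma (1 / (2 * (β:ℝ))))))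
        = (A * B) * ((β:ℝ) * 2 * (1 / (2 * (β:ℝ))) * (1 / (2 * (β:ℝ)))
            * (Real.Gamma (1 / (2 * (β:ℝ))) / Real.Gamma (1 / (2 * (β:ℝ))))) := by ring
    rw [key, hθe, div_self hgne]
    field_simp
  -- second moment
  have hk : 2 * (2 * β - 1) = 4 * β - 2 := by omega
  have hkc : ((2 * β - 1 : ℕ) : ℝ) = 2 * (β:ℝ) - 1 := by
    have h1 : (1:ℕ) ≤ 2 * β := by omega
    push_cast [Nat.cast_sub h1]; ring
  have m2 : (∫ x : ℝ, gnDens β θ x * x ^ (4 * β - 2))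
      = θ ^ (-2 + 1 / (β:ℝ)) * Real.Gamma (2 - 1 / (2 * (β:ℝ)))
        / Real.Gamma (1 / (2 * (β:ℝ))) := by
    have h := (momInt β (2 * β - 1) hβ hθ).2
    rw [hk, hkc] at h
    have step : (∫ x : ℝ, gnDens β θ x * x ^ (4 * β - 2))
        = (β:ℝ) * θ ^ (1 / (2 * (β:ℝ))) / Real.Gamma (1 / (2 * (β:ℝ)))
          * ∫ x : ℝ, x ^ (4 * β - 2) * Real.exp (-θ * x ^ (2 * β)) := by
      rw [← integral_const_mul]
      congr 1; funext x; rw [hgn x]; ring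
    have he : (2 * (2 * (β:ℝ) - 1) + 1) / (2 * (β:ℝ)) = 2 - 1 / (2 * (β:ℝ)) := by
      field_simp; ring
    have he2 : -(2 * (2 * (β:ℝ) - 1) + 1) / (2 * (β:ℝ)) = -2 + 1 / (2 * (β:ℝ)) := by
      field_simp; ring
    rw [step, h, he, he2]
    have hθe : θ ^ (1 / (2 * (β:ℝ))) * θ ^ (-2 + 1 / (2 * (β:ℝ))) = θ ^ (-2 + 1 / (β:ℝ)) := by
      rw [hrpow]
      congr 1
      field_simp
      ring
    generalize hA : θ ^ (1 / (2 * (β:ℝ))) = A at hθe ⊢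
    generalize hB : θ ^ (-2 + 1 / (2 * (β:ℝ))) = B at hθe ⊢
    generalize hD : θ ^ (-2 + 1 / (β:ℝ)) = D at hθe ⊢
    have key : (β:ℝ) * A / Real.Gamma (1 / (2 * (β:ℝ)))
        * (2 * (B * (1 / (2 * (β:ℝ))) * Real.Gamma (2 - 1 / (2 * (β:ℝ)))))
        = (A * B) * Real.Gamma (2 - 1 / (2 * (β:ℝ))) / Real.Gamma (1 / (2 * (β:ℝ)))
            * ((β:ℝ) * 2 * (1 / (2 * (β:ℝ)))) := by ring
    rw [key, hθe]
    have : (β:ℝ) * 2 * (1 / (2 * (β:ℝ))) = 1 := by field_simp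
    rw [this, mul_one]
  -- integrability
  have i1 : Integrable (fun x : ℝ => gnDens β θ x * x ^ (2 * β)) := by
    refine ((momInt β β hβ hθ).1.const_mul
      ((β:ℝ) * θ ^ (1 / (2 * (β:ℝ))) / Real.Gamma (1 / (2 * (β:ℝ))))).congr ?_
    filter_upwards with x
    rw [hgn x]; ring
  have i2 : Integrable (fun x : ℝ => gnDens β θ x * x ^ (4 * β - 2)) := by
    have h := (momInt β (2 * β - 1) hβ hθ).1
    rw [hk] at h
    refine (h.const_mul
      ((β:ℝ) * θ ^ (1 / (2 * (β:ℝ))) / Real.Gamma (1 / (2 * (β:ℝ))))).congr ?_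
    filter_upwards with x
    rw [hgn x]; ring
  -- pointwise expansion
  have hu : ∀ x : ℝ, uGN β θ x
      = -(2 * (β:ℝ) * (2 * (β:ℝ) - 1) * θ ^ (-1 + 1 / (β:ℝ))
          * Real.Gamma (1 - 1 / (2 * (β:ℝ))) / Real.Gamma (1 / (2 * (β:ℝ)))) * x
        + 2 * (β:ℝ) * x ^ (2 * β - 1) := fun x => rfl
  have key : ∀ x : ℝ, gnDens β θ x * (x ^ (2 * β - 1) * uGN β θ x)
      = -(2 * (β:ℝ) * (2 * (β:ℝ) - 1) * θ ^ (-1 + 1 / (β:ℝ))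
          * Real.Gamma (1 - 1 / (2 * (β:ℝ))) / Real.Gamma (1 / (2 * (β:ℝ))))
          * (gnDens β θ x * x ^ (2 * β))
        + 2 * (β:ℝ) * (gnDens β θ x * x ^ (4 * β - 2)) := by
    intro x
    have e1 : x ^ (2 * β - 1) * x = x ^ (2 * β) := by
      rw [← pow_succ]; congr 1; omega
    have e2 : x ^ (2 * β - 1) * x ^ (2 * β - 1) = x ^ (4 * β - 2) := by
      rw [← pow_add]; congr 1; omega
    calc gnDens β θ x * (x ^ (2 * β - 1) * uGN β θ x)
        = -(2 * (β:ℝ) * (2 * (β:ℝ) - 1) * θ ^ (-1 + 1 / (β:ℝ))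
            * Real.Gamma (1 - 1 / (2 * (β:ℝ))) / Real.Gamma (1 / (2 * (β:ℝ))))
            * (gnDens β θ x * (x ^ (2 * β - 1) * x))
          + 2 * (β:ℝ) * (gnDens β θ x * (x ^ (2 * β - 1) * x ^ (2 * β - 1))) := by
          rw [hu x]; ring
      _ = _ := by rw [e1, e2]
  have hGrec : Real.Gamma (2 - 1 / (2 * (β:ℝ)))
      = (1 - 1 / (2 * (β:ℝ))) * Real.Gamma (1 - 1 / (2 * (β:ℝ))) := by
    have he : (2:ℝ) - 1 / (2 * (β:ℝ)) = (1 - 1 / (2 * (β:ℝ))) + 1 := by ring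
    have hne : (1:ℝ) - 1 / (2 * (β:ℝ)) ≠ 0 := by
      intro h; rw [sub_eq_zero] at h; rw [← h] at hhalf; norm_num at hhalf
    rw [he, Real.Gamma_add_one hne]
  have hθ2 : θ ^ (-2 + 1 / (β:ℝ)) = θ ^ (-1 + 1 / (β:ℝ)) * θ⁻¹ := by
    rw [← Real.rpow_neg_one θ, hrpow]
    congr 1; ring
  have m4 : (∫ x : ℝ, gnDens β θ x * (x ^ (2 * β - 1) * uGN β θ x)) = 0 := by
    simp only [key]
    rw [integral_add (i1.const_mul _) (i2.const_mul _), integral_const_mul, integral_const_mul,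
      m1, m2, hGrec, hθ2]
    generalize θ ^ (-1 + 1 / (β:ℝ)) = T
    have hθne : θ ≠ 0 := ne_of_gt hθ
    have hbne : (β:ℝ) ≠ 0 := ne_of_gt hb
    field_simp
    ring
  refine ⟨m1, m2, ?_, m4, ?_⟩
  · have h3 : ∀ x : ℝ, gnDens β θ x * ((-(2 * (β:ℝ)) * x ^ (2 * β - 1)) * uGN β θ x)
        = -(2 * (β:ℝ)) * (gnDens β θ x * (x ^ (2 * β - 1) * uGN β θ x)) := by
      intro x; ring
    simp only [h3]
    rw [integral_const_mul, m4, mul_zero]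
  · intro h x
    subst h
    simp only [uGN]
    norm_num
    have hne : Real.Gamma (1 / 2 : ℝ) ≠ 0 := ne_of_gt (Real.Gamma_pos_of_pos (by norm_num))
    field_simp
    ring
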